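/- Let M be an additive commutative monoid, G an additive commutative group, and let s : ℕ → M and g : ℕ → G be families of elements. Suppose that the family g is linearly independent over ℤ, and that every non-negative linear relation among the s i transfers to g, i.e., for all finitely supported functions c, d : ℕ →₀ ℕ, if ∑ i, c i • s i = ∑ i, d i • s i in M, then ∑ i, c i • g i = ∑ i, d i • g i in G. Then M contains an additive submonoid isomorphic, as an additive monoid, to the free commutative monoid ℕ →₀ ℕ on countably many generators (that is, to (ℤ^{≥0})^∞, the direct sum of countably many copies of the non-negative integers). -/

import Mathlib

/-- Algebraic form of the paper's main theorem: if `g : ℕ → G` is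
`ℤ`-linearly independent in an abelian group `G` and every non-negative linear
relation among the `s i` in the commutative monoid `M` transfers to `g`, then
`M` contains an additive submonoid isomorphic to the free commutative monoid
`ℕ →₀ ℕ` on countably many generators (i.e. `(ℤ^{≥0})^∞`). -/
theorem stmt_1 {M G : Type*} [AddCommMonoid M] [AddCommGroup G]
    (s : ℕ → M) (g : ℕ → G)
    (hg : LinearIndependent ℤ g)
    (h : ∀ c d : ℕ →₀ ℕ,
      (c.sum fun i n => n • s i) = (d.sum fun i n => n • s i) →
      (c.sum fun i n => n • g i) = (d.sum fun i n => n • g i)) :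
    ∃ S : AddSubmonoid M, Nonempty ((ℕ →₀ ℕ) ≃+ S) := by
  set φ : (ℕ →₀ ℕ) →+ M := Finsupp.liftAddHom (fun i => multiplesHom M (s i)) with hφ
  have hφ_apply : ∀ c : ℕ →₀ ℕ, φ c = c.sum fun i n => n • s i := fun c => rfl
  have key : ∀ c : ℕ →₀ ℕ,
      Finsupp.linearCombination ℤ g (c.mapRange (Nat.cast) rfl) =
        c.sum fun i n => n • g i := by
    intro c
    rw [Finsupp.linearCombination_apply, Finsupp.sum_mapRange_index (by simp)]
    exact Finsupp.sum_congr fun i _ => natCast_zsmul _ _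
  have hinj : Function.Injective φ := by
    intro c d hcd
    have := h c d (by rw [← hφ_apply, ← hφ_apply, hcd])
    have h2 : c.mapRange (Nat.cast) rfl = (d.mapRange (Nat.cast (R := ℤ)) rfl) :=
      hg (by rw [key, key, this])
    exact Finsupp.mapRange_injective _ rfl Nat.cast_injective h2
  refine ⟨AddMonoidHom.mrange φ, ⟨AddEquiv.ofBijective φ.mrangeRestrict ⟨?_, ?_⟩⟩⟩
  · exact fun a b hab => hinj (congrArg Subtype.val hab)
  · exact φ.mrangeRestrict_surjective
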